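/- Let T > 0, let φ ∈ L¹(0,T) be real-valued, and let f : [0,T] → ℝ be absolutely continuous, i.e. there is g ∈ L¹(0,T) with f(t) = f(0) + ∫₀ᵗ g(s) ds for all t ∈ [0,T]. Then for almost every t ∈ (0,T) the function t ↦ ∫₀ᵗ φ(t−τ) f(τ) dτ is differentiable at t and its derivative satisfies (d/dt) ∫₀ᵗ φ(t−τ) f(τ) dτ − φ(t) f(0) = ∫₀ᵗ φ(t−τ) g(τ) dτ. -/

import Mathlib

open MeasureTheory Set Filter Topology

lemma setIntegral_eq_integral_of_vanish {f : ℝ → ℝ} {s : Set ℝ} (hs : MeasurableSet s)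
    (hv : ∀ x, x ∉ s → f x = 0) : ∫ x in s, f x = ∫ x, f x := by
  rw [← integral_indicator hs]
  congr 1
  ext x
  by_cases hx : x ∈ s <;> simp [hx, hv, indicator_of_mem, indicator_of_notMem]

lemma ae_hasDerivAt_primitive (h : ℝ → ℝ) (hh : Integrable h) :
    ∀ᵐ t ∂(volume : Measure ℝ), HasDerivAt (fun u => ∫ s in (0:ℝ)..u, h s) (h t) t := by
  filter_upwards [IsUnifLocDoublingMeasure.ae_tendsto_average_norm_sub (volume : Measure ℝ)
    hh.locallyIntegrable 1] with t ht
  rw [hasDerivAt_iff_tendsto_slope]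
  have hδ : Tendsto (fun u : ℝ => |u - t|) (𝓝[≠] t) (𝓝[>] 0) := by
    rw [tendsto_nhdsWithin_iff]
    constructor
    · have h1 : Tendsto (fun u : ℝ => |u - t|) (𝓝 t) (𝓝 |t - t|) :=
        (continuous_abs.comp (continuous_id.sub continuous_const)).tendsto t
      simpa using h1.mono_left nhdsWithin_le_nhds
    · filter_upwards [self_mem_nhdsWithin] with u hu
      exact abs_pos.2 (sub_ne_zero.2 hu)
  have key := ht (fun _ : ℝ => t) (fun u => |u - t|) hδ
    (by filter_upwards with u
        simp [Metric.mem_closedBall, dist_self, abs_nonneg])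
  have hb : ∀ᶠ u in 𝓝[≠] t,
      ‖slope (fun u => ∫ s in (0:ℝ)..u, h s) t u - h t‖
        ≤ 2 * ⨍ y in Metric.closedBall t |u - t|, ‖h y - h t‖ := by
    filter_upwards [self_mem_nhdsWithin] with u hu
    have hut : u - t ≠ 0 := sub_ne_zero.2 hu
    have habs : (0:ℝ) < |u - t| := abs_pos.2 hut
    have hFt : (∫ s in (0:ℝ)..u, h s) - ∫ s in (0:ℝ)..t, h s = ∫ s in t..u, h s :=
      intervalIntegral.integral_interval_sub_left hh.intervalIntegrable hh.intervalIntegrable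
    have hsl : slope (fun u => ∫ s in (0:ℝ)..u, h s) t u - h t
        = (∫ s in t..u, (h s - h t)) / (u - t) := by
      rw [slope_def_field, div_sub' hut]
      congr 1
      rw [intervalIntegral.integral_sub hh.intervalIntegrable
        (intervalIntegrable_const), intervalIntegral.integral_const, hFt]
      ring_nf
    rw [hsl]
    have hsub : Set.uIoc t u ⊆ Metric.closedBall t |u - t| := by
      intro y hy
      rw [Metric.mem_closedBall, Real.dist_eq]
      rcases le_total t u with hle | hle
      · rw [uIoc_of_le hle] at hy
        rw [abs_of_nonneg (by linarith [hy.1.le]), abs_of_nonneg (by linarith)]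
        linarith [hy.2]
      · rw [uIoc_of_ge hle] at hy
        rw [abs_of_nonpos (by linarith [hy.2]), abs_of_nonpos (by linarith)]
        linarith [hy.1.le]
    have hint : IntegrableOn (fun y => ‖h y - h t‖) (Metric.closedBall t |u - t|) := by
      exact (hh.integrableOn.sub (integrableOn_const (C := h t) measure_closedBall_lt_top.ne
        enorm_ne_top)).norm
    have h1 : ‖∫ s in t..u, (h s - h t)‖ ≤ ∫ s in Set.uIoc t u, ‖h s - h t‖ :=
      intervalIntegral.norm_integral_le_integral_norm_uIoc
    have h2 : (∫ s in Set.uIoc t u, ‖h s - h t‖)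
        ≤ ∫ y in Metric.closedBall t |u - t|, ‖h y - h t‖ := by
      apply setIntegral_mono_set hint
      · filter_upwards with y using norm_nonneg _
      · exact HasSubset.Subset.eventuallyLE hsub
    have hvol : (volume (Metric.closedBall t |u - t|)).toReal = 2 * |u - t| := by
      rw [Real.volume_closedBall]
      rw [ENNReal.toReal_ofReal (by positivity)]
    have h3 : (∫ y in Metric.closedBall t |u - t|, ‖h y - h t‖)
        = (2 * |u - t|) * ⨍ y in Metric.closedBall t |u - t|, ‖h y - h t‖ := by
      rw [setAverage_eq, measureReal_def, hvol, smul_eq_mul, ← mul_assoc,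
        mul_inv_cancel₀ (by positivity), one_mul]
    have havg : (0:ℝ) ≤ ⨍ y in Metric.closedBall t |u - t|, ‖h y - h t‖ := by
      rw [setAverage_eq, smul_eq_mul]
      exact mul_nonneg (by positivity) (integral_nonneg fun y => norm_nonneg _)
    calc ‖(∫ s in t..u, (h s - h t)) / (u - t)‖
        = ‖∫ s in t..u, (h s - h t)‖ / |u - t| := by
          rw [norm_div, Real.norm_eq_abs (u - t)]
      _ ≤ ((2 * |u - t|) * ⨍ y in Metric.closedBall t |u - t|, ‖h y - h t‖) / |u - t| := by
          rw [← h3]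
          gcongr
          exact h1.trans h2
      _ = 2 * ⨍ y in Metric.closedBall t |u - t|, ‖h y - h t‖ := by
          field_simp
  have : Tendsto (fun u => slope (fun u => ∫ s in (0:ℝ)..u, h s) t u - h t) (𝓝[≠] t) (𝓝 0) := by
    apply squeeze_zero_norm' hb
    simpa using key.const_mul (2:ℝ)
  simpa [tendsto_sub_nhds_zero_iff] using this

theorem scarpi_derivative_representation
    (T : ℝ) (hT : 0 < T) (φ f g : ℝ → ℝ)
    (hφ : IntegrableOn φ (Ioc 0 T))
    (hg : IntegrableOn g (Ioc 0 T))
    (hf : ∀ t ∈ Icc (0:ℝ) T, f t = f 0 + ∫ s in (0:ℝ)..t, g s) :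
    ∀ᵐ t ∂(volume.restrict (Ioo (0:ℝ) T)),
      HasDerivAt (fun u => ∫ τ in (0:ℝ)..u, φ (u - τ) * f τ)
        (φ t * f 0 + ∫ τ in (0:ℝ)..t, φ (t - τ) * g τ) t := by
  classical
  have hφ'm : StronglyMeasurable (hφ.1.mk φ) := hφ.1.stronglyMeasurable_mk
  have hφ'e : φ =ᵐ[volume.restrict (Ioc 0 T)] hφ.1.mk φ := hφ.1.ae_eq_mk
  have hg'm : StronglyMeasurable (hg.1.mk g) := hg.1.stronglyMeasurable_mk
  have hg'e : g =ᵐ[volume.restrict (Ioc 0 T)] hg.1.mk g := hg.1.ae_eq_mk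
  set Φ : ℝ → ℝ := (Ioc 0 T).indicator (hφ.1.mk φ) with hΦdef
  set G : ℝ → ℝ := (Ioc 0 T).indicator (hg.1.mk g) with hGdef
  have hΦm : StronglyMeasurable Φ := hφ'm.indicator measurableSet_Ioc
  have hGm : StronglyMeasurable G := hg'm.indicator measurableSet_Ioc
  have hΦi : Integrable Φ := IntegrableOn.integrable_indicator (hφ.congr hφ'e) measurableSet_Ioc
  have hGi : Integrable G := IntegrableOn.integrable_indicator (hg.congr hg'e) measurableSet_Ioc
  have hΦ0 : ∀ x, x ∉ Ioc (0:ℝ) T → Φ x = 0 := fun x hx => indicator_of_notMem hx _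
  have hG0 : ∀ x, x ∉ Ioc (0:ℝ) T → G x = 0 := fun x hx => indicator_of_notMem hx _
  have hφΦ : ∀ᵐ x : ℝ, x ∈ Ioc (0:ℝ) T → φ x = Φ x := by
    rw [← ae_restrict_iff' measurableSet_Ioc]
    filter_upwards [hφ'e, ae_restrict_mem measurableSet_Ioc] with x h1 h2
    rw [h1, hΦdef, indicator_of_mem h2]
  have hgG : ∀ᵐ x : ℝ, x ∈ Ioc (0:ℝ) T → g x = G x := by
    rw [← ae_restrict_iff' measurableSet_Ioc]
    filter_upwards [hg'e, ae_restrict_mem measurableSet_Ioc] with x h1 h2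
    rw [h1, hGdef, indicator_of_mem h2]
  set W : ℝ → ℝ := fun x => ∫ s in (0:ℝ)..x, G s with hWdef
  set Ψ : ℝ → ℝ := fun x => ∫ s in (0:ℝ)..x, Φ s with hΨdef
  have hWcont : Continuous W :=
    intervalIntegral.continuous_primitive (fun a b => hGi.intervalIntegrable) 0
  have hW0 : ∀ x : ℝ, x ≤ 0 → W x = 0 := by
    intro x hx
    rw [hWdef]
    simp only
    rw [intervalIntegral.integral_symm, intervalIntegral.integral_of_le hx,
      setIntegral_eq_zero_of_forall_eq_zero, neg_zero]
    intro y hy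
    exact hG0 y (fun hmem => absurd hmem.1 (not_lt.2 hy.2))
  have hΨ0 : ∀ x : ℝ, x ≤ 0 → Ψ x = 0 := by
    intro x hx
    rw [hΨdef]
    simp only
    rw [intervalIntegral.integral_symm, intervalIntegral.integral_of_le hx,
      setIntegral_eq_zero_of_forall_eq_zero, neg_zero]
    intro y hy
    exact hΦ0 y (fun hmem => absurd hmem.1 (not_lt.2 hy.2))
  have hWf : ∀ t ∈ Icc (0:ℝ) T, f t = f 0 + W t := by
    intro t ht
    rw [hf t ht]
    congr 1
    apply intervalIntegral.integral_congr_ae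
    filter_upwards [hgG] with x hx hmem
    rw [uIoc_of_le ht.1] at hmem
    exact hx ⟨hmem.1, hmem.2.trans ht.2⟩
  set c : ℝ → ℝ := fun t => ∫ s, G s * Φ (t - s) with hcdef
  have hci : Integrable c := by
    have := hGi.integrable_convolution (ContinuousLinearMap.mul ℝ ℝ) hΦi
    refine this.congr (Eventually.of_forall fun t => ?_)
    simp only [convolution_def, ContinuousLinearMap.mul_apply', hcdef]
  set h : ℝ → ℝ := fun t => Φ t * f 0 + c t with hhdef
  have hhi : Integrable h := (hΦi.mul_const _).add hci

  -- pullback of the a.e. equality φ = Φ through τ ↦ u - τ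
  have hpull : ∀ u : ℝ, ∀ᵐ τ : ℝ, (u - τ ∈ Ioc (0:ℝ) T → φ (u - τ) = Φ (u - τ)) := fun u =>
    (Measure.measurePreserving_sub_left volume u).quasiMeasurePreserving.ae hφΦ
  have hne : ∀ t : ℝ, ∀ᵐ τ : ℝ, τ ≠ t := by
    intro t
    rw [ae_iff]
    simpa using measure_singleton t
  -- integrability of τ ↦ Φ (u - τ)
  have hΦu : ∀ u : ℝ, Integrable (fun τ => Φ (u - τ)) := fun u =>
    (integrable_comp_sub_left Φ u).2 hΦi
  -- ∫ over Iic x equals the primitive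
  have hIic : ∀ (F : ℝ → ℝ), Integrable F volume → (∀ x, x ∉ Ioc (0:ℝ) T → F x = 0) →
      ∀ x : ℝ, ∫ s in Iic x, F s = ∫ s in (0:ℝ)..x, F s := by
    intro F hFi hF0 x
    rcases le_or_gt 0 x with hx | hx
    · have hz : (∫ s in Iic (0:ℝ), F s) = 0 :=
        setIntegral_eq_zero_of_forall_eq_zero
          (fun y (hy : y ∈ Iic (0:ℝ)) => hF0 y (fun hmem => absurd hmem.1 (not_lt.2 hy)))
      rw [← Iic_union_Ioc_eq_Iic hx,
        setIntegral_union (Iic_disjoint_Ioc le_rfl) measurableSet_Ioc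
          hFi.integrableOn hFi.integrableOn, hz, zero_add,
        intervalIntegral.integral_of_le hx]
    · have hz : (∫ s in Iic x, F s) = 0 :=
        setIntegral_eq_zero_of_forall_eq_zero
          (fun y (hy : y ∈ Iic x) => hF0 y
            (fun hmem => absurd hmem.1 (not_lt.2 (le_of_lt (lt_of_le_of_lt hy hx)))))
      rw [hz, intervalIntegral.integral_symm, intervalIntegral.integral_of_le hx.le]
      have hz2 : (∫ s in Ioc x 0, F s) = 0 :=
        setIntegral_eq_zero_of_forall_eq_zero
          (fun y (hy : y ∈ Ioc x 0) => hF0 y (fun hmem => absurd hmem.1 (not_lt.2 hy.2)))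
      rw [hz2, neg_zero]
  have hIicW : ∀ x : ℝ, ∫ s in Iic x, G s = W x := hIic G hGi hG0
  have hIicΨ : ∀ x : ℝ, ∫ s in Iic x, Φ s = Ψ x := hIic Φ hΦi hΦ0
  -- the convolution-form identity for the claimed derivative
  have hconv : ∀ t ∈ Ioc (0:ℝ) T, (∫ τ in (0:ℝ)..t, φ (t - τ) * g τ) = c t := by
    intro t ht
    have h1 : (∫ τ in (0:ℝ)..t, φ (t - τ) * g τ) = ∫ τ in (0:ℝ)..t, Φ (t - τ) * G τ := by
      apply intervalIntegral.integral_congr_ae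
      filter_upwards [hpull t, hgG, hne t] with τ h1 h2 h3 hmem
      rw [uIoc_of_le ht.1.le] at hmem
      have htτ : t - τ ∈ Ioc (0:ℝ) T :=
        ⟨sub_pos.2 (lt_of_le_of_ne hmem.2 h3), by linarith [hmem.1, ht.2]⟩
      rw [h1 htτ, h2 ⟨hmem.1, hmem.2.trans ht.2⟩]
    rw [h1, intervalIntegral.integral_of_le ht.1.le,
      setIntegral_eq_integral_of_vanish measurableSet_Ioc ?_]
    · rw [hcdef]
      congr 1
      funext τ
      ring
    · intro τ hτ
      rcases not_and_or.1 hτ with h2 | h2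
      · rw [hG0 τ (fun hmem => absurd hmem.1 (by simpa using h2)), mul_zero]
      · have : t - τ ≤ 0 := by push_neg at h2; linarith
        rw [hΦ0 _ (fun hmem => absurd hmem.1 (not_lt.2 this)), zero_mul]
  -- Fubini 1  : ∫ τ, Φ (u - τ) * W τ = ∫ s, G s * Ψ (u - s)
  have hF1 : ∀ u : ℝ, (∫ τ, Φ (u - τ) * W τ) = ∫ s, G s * Ψ (u - s) := by
    intro u
    have hker : Integrable
        (Function.uncurry fun τ s => Φ (u - τ) * (Iic τ).indicator G s)
        (volume.prod volume) := by
      apply Integrable.mono' ((hΦu u).norm.mul_prod hGi.norm)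
      · have e1 : (Function.uncurry fun τ s => Φ (u - τ) * (Iic τ).indicator G s)
            = fun p : ℝ × ℝ => Φ (u - p.1) *
              ({q : ℝ × ℝ | q.2 ≤ q.1}.indicator (fun q => G q.2) p) := by
          funext p
          simp only [Function.uncurry]
          by_cases hp : p.2 ≤ p.1
          · rw [indicator_of_mem (by exact hp) G, indicator_of_mem (by exact hp)]
          · rw [indicator_of_notMem (by exact hp) G, indicator_of_notMem (by exact hp)]
        rw [e1]
        exact ((hΦm.comp_measurable (measurable_const.sub measurable_fst)).mul
          ((hGm.comp_measurable measurable_snd).indicator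
            (measurableSet_le measurable_snd measurable_fst))).aestronglyMeasurable
      · filter_upwards with p
        simp only [Function.uncurry, norm_mul]
        gcongr
        exact norm_indicator_le_norm_self G p.2
    have swap := integral_integral_swap hker
    have lhs : (∫ τ, ∫ s, Φ (u - τ) * (Iic τ).indicator G s)
        = ∫ τ, Φ (u - τ) * W τ := by
      congr 1
      funext τ
      rw [integral_const_mul, integral_indicator measurableSet_Iic, hIicW]
    have rhs : (∫ s, ∫ τ, Φ (u - τ) * (Iic τ).indicator G s)
        = ∫ s, G s * Ψ (u - s) := by
      congr 1
      funext s
      have e2 : (fun τ => Φ (u - τ) * (Iic τ).indicator G s)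
          = fun τ => (Iic (u - s)).indicator Φ (u - τ) * G s := by
        funext τ
        by_cases hp : s ≤ τ
        · rw [indicator_of_mem (by exact hp) G,
            indicator_of_mem (by simp only [mem_Iic]; linarith)]
        · rw [indicator_of_notMem (by exact hp) G, mul_zero,
            indicator_of_notMem (by simp only [mem_Iic]; push_neg at hp ⊢; linarith), zero_mul]
      rw [e2, integral_mul_const, integral_sub_left_eq_self ((Iic (u - s)).indicator Φ) volume u,
        integral_indicator measurableSet_Iic, hIicΨ]
      ring
    rw [← lhs, swap, rhs]
  -- Fubini 2 : ∫ t in 0..u, c t = ∫ s, G s * Ψ (u - s) for 0 ≤ u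
  have hF2 : ∀ u : ℝ, 0 ≤ u → (∫ t in (0:ℝ)..u, c t) = ∫ s, G s * Ψ (u - s) := by
    intro u hu
    have hker0 : Integrable (fun p : ℝ × ℝ => G p.2 * Φ (p.1 - p.2)) (volume.prod volume) := by
      have := hGi.convolution_integrand (ContinuousLinearMap.mul ℝ ℝ) hΦi
      simpa only [ContinuousLinearMap.mul_apply'] using this
    have hker : Integrable
        (Function.uncurry fun t s => (Ioc (0:ℝ) u).indicator (fun _ => (1:ℝ)) t *
          (G s * Φ (t - s))) (volume.prod volume) := by
      apply hker0.bdd_mul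
      · exact ((stronglyMeasurable_const.indicator measurableSet_Ioc).comp_measurable
          measurable_fst).aestronglyMeasurable
      · refine ae_of_all _ (fun p => (?_ : _ ≤ (1:ℝ)))
        by_cases hp : p.1 ∈ Ioc (0:ℝ) u
        · simp [hp]
        · simp [hp]
    have swap := integral_integral_swap hker
    have lhs : (∫ t, ∫ s, (Ioc (0:ℝ) u).indicator (fun _ => (1:ℝ)) t * (G s * Φ (t - s)))
        = ∫ t in (0:ℝ)..u, c t := by
      rw [intervalIntegral.integral_of_le hu, ← integral_indicator measurableSet_Ioc]
      congr 1
      funext t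
      rw [integral_const_mul]
      by_cases hp : t ∈ Ioc (0:ℝ) u
      · rw [indicator_of_mem hp, indicator_of_mem hp, one_mul, hcdef]
      · rw [indicator_of_notMem hp, indicator_of_notMem hp, zero_mul]
    have rhs : (∫ s, ∫ t, (Ioc (0:ℝ) u).indicator (fun _ => (1:ℝ)) t * (G s * Φ (t - s)))
        = ∫ s, G s * Ψ (u - s) := by
      congr 1
      funext s
      have e2 : (fun t => (Ioc (0:ℝ) u).indicator (fun _ => (1:ℝ)) t * (G s * Φ (t - s)))
          = fun t => (Ioc (0:ℝ) u).indicator (fun t => Φ (t - s)) t * G s := by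
        funext t
        by_cases hp : t ∈ Ioc (0:ℝ) u
        · rw [indicator_of_mem hp, indicator_of_mem hp, one_mul]; ring
        · rw [indicator_of_notMem hp, indicator_of_notMem hp, zero_mul, zero_mul]
      rw [e2, integral_mul_const, integral_indicator measurableSet_Ioc]
      have e3 : (∫ t in Ioc (0:ℝ) u, Φ (t - s)) = Ψ (u - s) - Ψ (-s) := by
        rw [← intervalIntegral.integral_of_le hu, intervalIntegral.integral_comp_sub_right Φ s,
          zero_sub, hΨdef]
        simp only
        rw [← intervalIntegral.integral_interval_sub_left hΦi.intervalIntegrable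
          hΦi.intervalIntegrable]
      rw [e3]
      rcases le_or_gt s 0 with hs | hs
      · rw [hG0 s (fun hmem => absurd hmem.1 (not_lt.2 hs)), mul_zero, zero_mul]
      · rw [hΨ0 (-s) (by linarith), sub_zero]
        ring
    rw [← lhs, swap, rhs]
  -- the key identity
  have key : ∀ u ∈ Icc (0:ℝ) T,
      (∫ τ in (0:ℝ)..u, φ (u - τ) * f τ) = ∫ s in (0:ℝ)..u, h s := by
    intro u hu
    rcases eq_or_lt_of_le hu.1 with rfl | hupos
    · simp
    have step1 : (∫ τ in (0:ℝ)..u, φ (u - τ) * f τ)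
        = ∫ τ in (0:ℝ)..u, (Φ (u - τ) * f 0 + Φ (u - τ) * W τ) := by
      apply intervalIntegral.integral_congr_ae
      filter_upwards [hpull u, hne u] with τ h1 h2 hmem
      rw [uIoc_of_le hupos.le] at hmem
      have huτ : u - τ ∈ Ioc (0:ℝ) T :=
        ⟨sub_pos.2 (lt_of_le_of_ne hmem.2 h2), by linarith [hmem.1, hu.2]⟩
      rw [h1 huτ, hWf τ ⟨hmem.1.le, hmem.2.trans hu.2⟩]
      ring
    have II1 : IntervalIntegrable (fun τ => Φ (u - τ) * f 0) volume 0 u :=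
      ((hΦu u).mul_const (f 0)).intervalIntegrable
    have II2 : IntervalIntegrable (fun τ => Φ (u - τ) * W τ) volume 0 u :=
      (hΦu u).intervalIntegrable.mul_continuousOn hWcont.continuousOn
    have step3 : (∫ τ in (0:ℝ)..u, Φ (u - τ) * f 0) = Ψ u * f 0 := by
      rw [intervalIntegral.integral_mul_const, intervalIntegral.integral_comp_sub_left Φ u,
        sub_self, sub_zero, hΨdef]
    have step4 : (∫ τ in (0:ℝ)..u, Φ (u - τ) * W τ) = ∫ τ, Φ (u - τ) * W τ := by
      rw [intervalIntegral.integral_of_le hupos.le]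
      apply setIntegral_eq_integral_of_vanish measurableSet_Ioc
      intro τ hτ
      rcases not_and_or.1 hτ with h2 | h2
      · push_neg at h2
        rw [hW0 τ h2, mul_zero]
      · push_neg at h2
        rw [hΦ0 (u - τ) (fun hmem => absurd hmem.1 (by simp only [not_lt]; linarith)), zero_mul]
    have rhs : (∫ s in (0:ℝ)..u, h s) = Ψ u * f 0 + ∫ t in (0:ℝ)..u, c t := by
      rw [hhdef]
      simp only
      rw [intervalIntegral.integral_add ((hΦi.mul_const (f 0)).intervalIntegrable)
        hci.intervalIntegrable, intervalIntegral.integral_mul_const, hΨdef]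
    rw [step1, intervalIntegral.integral_add II1 II2, step3, step4, hF1 u, rhs,
      hF2 u hupos.le]
  have hres : ∀ᵐ t ∂(volume.restrict (Ioo (0:ℝ) T)),
      HasDerivAt (fun u => ∫ s in (0:ℝ)..u, h s) (h t) t :=
    ae_restrict_of_ae (ae_hasDerivAt_primitive h hhi)
  have hφres : ∀ᵐ t ∂(volume.restrict (Ioo (0:ℝ) T)), φ t = Φ t := by
    filter_upwards [ae_restrict_of_ae hφΦ, ae_restrict_mem measurableSet_Ioo] with t h1 h2
    exact h1 ⟨h2.1, h2.2.le⟩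
  filter_upwards [hres, hφres, ae_restrict_mem measurableSet_Ioo] with t hftc hφt hmem
  have hval : φ t * f 0 + (∫ τ in (0:ℝ)..t, φ (t - τ) * g τ) = h t := by
    rw [hφt, hconv t ⟨hmem.1, hmem.2.le⟩, hhdef]
  rw [hval]
  apply hftc.congr_of_eventuallyEq
  filter_upwards [isOpen_Ioo.mem_nhds hmem] with u hu
  exact key u (Ioo_subset_Icc_self hu)
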